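/- Let {P_θ} be a one-parameter exponential family with sufficient statistic T and log-partition A, and define Ψ̇_θ(t, θ) = E_θ[1{T(X) ≥ t}(T(X) − A'(θ))]. Then (t, θ) ↦ Ψ̇_θ(t, θ) is continuous at (t0, θ0) where t0 = E_{θ0}[T(X)] = A'(θ0), and Ψ̇_θ(t0, θ0) = (1/2) E_{θ0}[|T(X) − t0|]. -/

import Mathlib

open MeasureTheory Filter Topology
open scoped NNReal ENNReal

/-- Log-partition function `A(θ) = log ∫ e^{θ T(x)} dμ(x)` of a one-parameter
exponential family. -/
noncomputable def logPart {X : Type*} [MeasurableSpace X]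
    (μ : Measure X) (T : X → ℝ) (θ : ℝ) : ℝ :=
  Real.log (∫ x, Real.exp (θ * T x) ∂μ)

/-- The exponential family measure `P_θ` with density `exp(θ T(x) - A(θ))` w.r.t. `μ`. -/
noncomputable def expFam {X : Type*} [MeasurableSpace X]
    (μ : Measure X) (T : X → ℝ) (θ : ℝ) : Measure X :=
  μ.withDensity fun x => ENNReal.ofReal (Real.exp (θ * T x - logPart μ T θ))

lemma exp_le_add_of_mem {a b θ u : ℝ} (h1 : a ≤ θ) (h2 : θ ≤ b) :
    Real.exp (θ * u) ≤ Real.exp (a * u) + Real.exp (b * u) := by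
  rcases le_or_gt 0 u with hu | hu
  · calc Real.exp (θ * u) ≤ Real.exp (b * u) := Real.exp_le_exp.2 (by nlinarith)
      _ ≤ _ := le_add_of_nonneg_left (Real.exp_pos _).le
  · calc Real.exp (θ * u) ≤ Real.exp (a * u) := Real.exp_le_exp.2 (by nlinarith)
      _ ≤ _ := le_add_of_nonneg_right (Real.exp_pos _).le

lemma abs_mul_exp_le {δ θ u : ℝ} (hδ : 0 < δ) :
    |u| * Real.exp (θ * u) ≤ δ⁻¹ * (Real.exp ((θ + δ) * u) + Real.exp ((θ - δ) * u)) := by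
  have key : δ * |u| ≤ Real.exp (δ * u) + Real.exp (-(δ * u)) := by
    have h1 : δ * |u| ≤ Real.exp (δ * |u|) := by
      linarith [Real.add_one_le_exp (δ * |u|)]
    have h2 : Real.exp (δ * |u|) ≤ Real.exp (δ * u) + Real.exp (-(δ * u)) := by
      rcases abs_cases u with ⟨h, _⟩ | ⟨h, _⟩
      · rw [h]; exact le_add_of_nonneg_right (Real.exp_pos _).le
      · rw [h, mul_neg]; exact le_add_of_nonneg_left (Real.exp_pos _).le
    linarith
  calc |u| * Real.exp (θ * u) = δ⁻¹ * ((δ * |u|) * Real.exp (θ * u)) := by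
        field_simp
      _ ≤ δ⁻¹ * ((Real.exp (δ * u) + Real.exp (-(δ * u))) * Real.exp (θ * u)) := by
        apply mul_le_mul_of_nonneg_left _ (inv_nonneg.2 hδ.le)
        exact mul_le_mul_of_nonneg_right key (Real.exp_pos _).le
      _ = δ⁻¹ * (Real.exp ((θ + δ) * u) + Real.exp ((θ - δ) * u)) := by
        rw [add_mul, ← Real.exp_add, ← Real.exp_add]; ring_nf

lemma expFam_integral_eq {X : Type*} [MeasurableSpace X] (μ : Measure X) {T : X → ℝ}
    (hT : Measurable T) (θ : ℝ) (g : X → ℝ) :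
    ∫ x, g x ∂(expFam μ T θ) = ∫ x, Real.exp (θ * T x - logPart μ T θ) * g x ∂μ := by
  have hmeas : Measurable fun x => Real.toNNReal (Real.exp (θ * T x - logPart μ T θ)) :=
    ((hT.const_mul θ).sub_const _).exp.real_toNNReal
  rw [expFam,
    show (fun x => ENNReal.ofReal (Real.exp (θ * T x - logPart μ T θ)))
      = (fun x => ((Real.toNNReal (Real.exp (θ * T x - logPart μ T θ)) : ℝ≥0) : ℝ≥0∞)) from rfl,
    integral_withDensity_eq_integral_smul hmeas]
  congr 1
  ext x
  rw [NNReal.smul_def, Real.coe_toNNReal _ (Real.exp_pos _).le, smul_eq_mul]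

lemma expFam_integrable_iff {X : Type*} [MeasurableSpace X] (μ : Measure X) {T : X → ℝ}
    (hT : Measurable T) (θ : ℝ) (g : X → ℝ) :
    Integrable g (expFam μ T θ) ↔
      Integrable (fun x => Real.exp (θ * T x - logPart μ T θ) * g x) μ := by
  have hmeas : Measurable fun x => Real.toNNReal (Real.exp (θ * T x - logPart μ T θ)) :=
    ((hT.const_mul θ).sub_const _).exp.real_toNNReal
  rw [expFam,
    show (fun x => ENNReal.ofReal (Real.exp (θ * T x - logPart μ T θ)))
      = (fun x => ((Real.toNNReal (Real.exp (θ * T x - logPart μ T θ)) : ℝ≥0) : ℝ≥0∞)) from rfl,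
    integrable_withDensity_iff_integrable_smul hmeas]
  apply integrable_congr
  filter_upwards with x
  rw [NNReal.smul_def, Real.coe_toNNReal _ (Real.exp_pos _).le, smul_eq_mul]

/-- `Ψ̇_θ(t, θ) = E_θ[1{T(X) ≥ t}(T(X) - A'(θ))]`, using `A'(θ) = E_θ[T(X)]`. -/
noncomputable def psiDot {X : Type*} [MeasurableSpace X]
    (μ : Measure X) (T : X → ℝ) (t θ : ℝ) : ℝ :=
  ∫ x, (if t ≤ T x then T x - ∫ y, T y ∂(expFam μ T θ) else 0) ∂(expFam μ T θ)

/-- Continuity of `Ψ̇_θ` at `(t₀, θ₀)` where `t₀ = E_{θ₀}[T(X)] = A'(θ₀)`, together with the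
identity `Ψ̇_θ(t₀, θ₀) = (1/2) E_{θ₀}[|T(X) - t₀|]`. -/
theorem statement15 {X : Type*} [MeasurableSpace X]
    (μ : Measure X) (hμ : μ ≠ 0) (T : X → ℝ) (hT : Measurable T) (θ0 : ℝ)
    (hnbhd : ∃ ε > 0, ∀ θ : ℝ, |θ - θ0| < ε →
      Integrable (fun x => Real.exp (θ * T x)) μ)
    (t0 : ℝ) (ht0 : t0 = ∫ x, T x ∂(expFam μ T θ0)) :
    ContinuousAt (fun p : ℝ × ℝ => psiDot μ T p.1 p.2) (t0, θ0) ∧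
      psiDot μ T t0 θ0 = (1 / 2) * ∫ x, |T x - t0| ∂(expFam μ T θ0) := by
  classical
  obtain ⟨ε, hε, hInt⟩ := hnbhd
  have hθ00 : |θ0 - θ0| < ε := by simpa using hε
  have hZpos : ∀ θ : ℝ, |θ - θ0| < ε → 0 < ∫ x, Real.exp (θ * T x) ∂μ := by
    intro θ hθ
    refine (integral_pos_iff_support_of_nonneg (fun x => (Real.exp_pos _).le) (hInt θ hθ)).2 ?_
    have hsupp : (Function.support fun x => Real.exp (θ * T x)) = Set.univ := by
      ext x
      simp [Function.support, (Real.exp_pos (θ * T x)).ne']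
    rw [hsupp]
    exact pos_iff_ne_zero.2 (MeasureTheory.Measure.measure_univ_ne_zero.2 hμ)
  -- change of variables
  have hCoV : ∀ θ : ℝ, |θ - θ0| < ε → ∀ g : X → ℝ,
      ∫ x, g x ∂(expFam μ T θ)
        = (∫ x, Real.exp (θ * T x) ∂μ)⁻¹ * ∫ x, Real.exp (θ * T x) * g x ∂μ := by
    intro θ hθ g
    rw [expFam_integral_eq μ hT θ g]
    have hden : ∀ x, Real.exp (θ * T x - logPart μ T θ) * g x
        = (∫ x, Real.exp (θ * T x) ∂μ)⁻¹ * (Real.exp (θ * T x) * g x) := by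
      intro x
      rw [Real.exp_sub, logPart, Real.exp_log (hZpos θ hθ)]
      ring
    simp_rw [hden]
    rw [integral_const_mul]
  -- integrability of |T| * exp(θ T)
  have hIntAbsT : ∀ θ : ℝ, |θ - θ0| < ε →
      Integrable (fun x => |T x| * Real.exp (θ * T x)) μ := by
    intro θ hθ
    set δ' := (ε - |θ - θ0|) / 2 with hδ'def
    have hδpos : 0 < δ' := by rw [hδ'def]; linarith
    have h1 : |θ + δ' - θ0| < ε := by
      calc |θ + δ' - θ0| = |(θ - θ0) + δ'| := by ring_nf
        _ ≤ |θ - θ0| + |δ'| := abs_add_le _ _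
        _ = |θ - θ0| + δ' := by rw [abs_of_pos hδpos]
        _ < ε := by linarith
    have h2 : |θ - δ' - θ0| < ε := by
      calc |θ - δ' - θ0| = |(θ - θ0) + (-δ')| := by ring_nf
        _ ≤ |θ - θ0| + |(-δ')| := abs_add_le _ _
        _ = |θ - θ0| + δ' := by rw [abs_neg, abs_of_pos hδpos]
        _ < ε := by linarith
    refine Integrable.mono' (((hInt _ h1).add (hInt _ h2)).const_mul δ'⁻¹)
      ((hT.abs.mul ((hT.const_mul θ).exp)).aestronglyMeasurable) ?_
    filter_upwards with x
    rw [Real.norm_eq_abs, abs_of_nonneg (by positivity)]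
    exact abs_mul_exp_le hδpos
  have hIntTexp : ∀ θ : ℝ, |θ - θ0| < ε →
      Integrable (fun x => Real.exp (θ * T x) * T x) μ := by
    intro θ hθ
    refine Integrable.mono' (hIntAbsT θ hθ)
      (((hT.const_mul θ).exp.mul hT).aestronglyMeasurable) ?_
    filter_upwards with x
    rw [norm_mul, Real.norm_eq_abs, Real.norm_eq_abs, abs_of_pos (Real.exp_pos _)]
    exact (mul_comm _ _).le
  have hIntMax : ∀ t θ : ℝ, |θ - θ0| < ε →
      Integrable (fun x => max (T x - t) 0 * Real.exp (θ * T x)) μ := by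
    intro t θ hθ
    refine Integrable.mono' (((hInt θ hθ).const_mul |t|).add (hIntAbsT θ hθ))
      ((((hT.sub_const t).max measurable_const).mul ((hT.const_mul θ).exp)).aestronglyMeasurable) ?_
    filter_upwards with x
    rw [Real.norm_eq_abs, abs_of_nonneg (by positivity)]
    have h1 : max (T x - t) 0 ≤ |t| + |T x| := by
      apply max_le
      · linarith [le_abs_self (T x), neg_le_abs t]
      · positivity
    calc max (T x - t) 0 * Real.exp (θ * T x) ≤ (|t| + |T x|) * Real.exp (θ * T x) :=
        mul_le_mul_of_nonneg_right h1 (Real.exp_pos _).le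
      _ = |t| * Real.exp (θ * T x) + |T x| * Real.exp (θ * T x) := by ring
  have hIndMeas : ∀ t : ℝ, Measurable fun x => (if t ≤ T x then (1:ℝ) else 0) :=
    fun t => Measurable.ite (measurableSet_le measurable_const hT) measurable_const measurable_const
  have hIntInd : ∀ t θ : ℝ, |θ - θ0| < ε →
      Integrable (fun x => (if t ≤ T x then (1:ℝ) else 0) * Real.exp (θ * T x)) μ := by
    intro t θ hθ
    refine Integrable.mono' (hInt θ hθ)
      (((hIndMeas t).mul ((hT.const_mul θ).exp)).aestronglyMeasurable) ?_
    filter_upwards with x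
    rw [Real.norm_eq_abs]
    by_cases h : t ≤ T x <;>
      simp [h, abs_of_pos (Real.exp_pos (θ * T x)), (Real.exp_pos (θ * T x)).le]
  -- decomposition of psiDot
  have hpsi_eq : ∀ t θ : ℝ, |θ - θ0| < ε → psiDot μ T t θ =
      (∫ x, Real.exp (θ * T x) ∂μ)⁻¹ *
        ((∫ x, max (T x - t) 0 * Real.exp (θ * T x) ∂μ) +
          (t - ∫ y, T y ∂(expFam μ T θ)) *
            ∫ x, (if t ≤ T x then (1:ℝ) else 0) * Real.exp (θ * T x) ∂μ) := by
    intro t θ hθ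
    have h0 : psiDot μ T t θ = (∫ x, Real.exp (θ * T x) ∂μ)⁻¹ *
        ∫ x, Real.exp (θ * T x) *
          (if t ≤ T x then T x - ∫ y, T y ∂(expFam μ T θ) else 0) ∂μ :=
      hCoV θ hθ _
    rw [h0]
    congr 1
    have hsplit : (fun x => Real.exp (θ * T x) *
          (if t ≤ T x then T x - ∫ y, T y ∂(expFam μ T θ) else 0))
        = fun x => max (T x - t) 0 * Real.exp (θ * T x) +
            (t - ∫ y, T y ∂(expFam μ T θ)) *
              ((if t ≤ T x then (1:ℝ) else 0) * Real.exp (θ * T x)) := by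
      funext x
      by_cases h : t ≤ T x
      · rw [if_pos h, if_pos h, max_eq_left (by linarith)]; ring
      · rw [if_neg h, if_neg h, max_eq_right (by linarith)]; ring
    rw [hsplit, integral_add (hIntMax t θ hθ) ((hIntInd t θ hθ).const_mul _),
      integral_const_mul]
  have hδ2 : (0:ℝ) < ε / 2 := by linarith
  have hb1 : |θ0 - ε / 2 - θ0| < ε := by
    rw [show θ0 - ε / 2 - θ0 = -(ε / 2) by ring, abs_neg, abs_of_pos hδ2]; linarith
  have hb2 : |θ0 + ε / 2 - θ0| < ε := by
    rw [show θ0 + ε / 2 - θ0 = ε / 2 by ring, abs_of_pos hδ2]; linarith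
  -- continuity of the normalizer
  have hZcont : Filter.Tendsto (fun θ => ∫ x, Real.exp (θ * T x) ∂μ) (𝓝 θ0)
      (𝓝 (∫ x, Real.exp (θ0 * T x) ∂μ)) := by
    apply tendsto_integral_filter_of_dominated_convergence
      (fun x => Real.exp ((θ0 - ε / 2) * T x) + Real.exp ((θ0 + ε / 2) * T x))
    · exact Filter.Eventually.of_forall fun θ => ((hT.const_mul θ).exp).aestronglyMeasurable
    · filter_upwards [(eventually_abs_sub_lt θ0 hδ2)] with θ hθ
      filter_upwards with x
      rw [Real.norm_eq_abs, abs_of_pos (Real.exp_pos _)]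
      have h1 : θ0 - ε / 2 ≤ θ := by linarith [(abs_le.1 hθ.le).1]
      have h2 : θ ≤ θ0 + ε / 2 := by linarith [(abs_le.1 hθ.le).2]
      exact exp_le_add_of_mem h1 h2
    · exact (hInt _ hb1).add (hInt _ hb2)
    · filter_upwards with x
      exact ((continuous_id.mul continuous_const).rexp.tendsto θ0)
  -- continuity of θ ↦ ∫ exp(θT) T
  have hTcont : Filter.Tendsto (fun θ => ∫ x, Real.exp (θ * T x) * T x ∂μ) (𝓝 θ0)
      (𝓝 (∫ x, Real.exp (θ0 * T x) * T x ∂μ)) := by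
    apply tendsto_integral_filter_of_dominated_convergence
      (fun x => |T x| * Real.exp ((θ0 - ε / 2) * T x) + |T x| * Real.exp ((θ0 + ε / 2) * T x))
    · exact Filter.Eventually.of_forall fun θ => ((hT.const_mul θ).exp.mul hT).aestronglyMeasurable
    · filter_upwards [(eventually_abs_sub_lt θ0 hδ2)] with θ hθ
      filter_upwards with x
      rw [norm_mul, Real.norm_eq_abs, Real.norm_eq_abs, abs_of_pos (Real.exp_pos _)]
      have ha : θ0 - ε / 2 ≤ θ := by linarith [(abs_le.1 hθ.le).1]
      have hb : θ ≤ θ0 + ε / 2 := by linarith [(abs_le.1 hθ.le).2]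
      have h2 := exp_le_add_of_mem (u := T x) ha hb
      nlinarith [abs_nonneg (T x)]
    · exact (hIntAbsT _ hb1).add (hIntAbsT _ hb2)
    · filter_upwards with x
      exact (((continuous_id.mul continuous_const).rexp.mul continuous_const).tendsto θ0)
  -- joint continuity of the positive-part integral
  have hI1 : Filter.Tendsto
      (fun p : ℝ × ℝ => ∫ x, max (T x - p.1) 0 * Real.exp (p.2 * T x) ∂μ)
      (𝓝 (t0, θ0)) (𝓝 (∫ x, max (T x - t0) 0 * Real.exp (θ0 * T x) ∂μ)) := by
    apply tendsto_integral_filter_of_dominated_convergence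
      (fun x => (|t0| + 1 + |T x|) *
        (Real.exp ((θ0 - ε / 2) * T x) + Real.exp ((θ0 + ε / 2) * T x)))
    · exact Filter.Eventually.of_forall fun p =>
        (((hT.sub_const p.1).max measurable_const).mul
          ((hT.const_mul p.2).exp)).aestronglyMeasurable
    · have hev1 : ∀ᶠ p : ℝ × ℝ in 𝓝 (t0, θ0), |p.1 - t0| ≤ 1 :=
        (continuous_fst.tendsto (t0, θ0)).eventually
          ((eventually_abs_sub_lt t0 one_pos).mono fun s h => h.le)
      have hev2 : ∀ᶠ p : ℝ × ℝ in 𝓝 (t0, θ0), |p.2 - θ0| ≤ ε / 2 :=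
        (continuous_snd.tendsto (t0, θ0)).eventually
          ((eventually_abs_sub_lt θ0 hδ2).mono fun s h => h.le)
      filter_upwards [hev1, hev2] with p hp1 hp2
      filter_upwards with x
      rw [Real.norm_eq_abs, abs_of_nonneg (by positivity)]
      have h1 : max (T x - p.1) 0 ≤ |t0| + 1 + |T x| := by
        apply max_le
        · have hp1' : |p.1| ≤ |t0| + 1 := by
            calc |p.1| = |t0 + (p.1 - t0)| := by ring_nf
              _ ≤ |t0| + |p.1 - t0| := abs_add_le _ _
              _ ≤ |t0| + 1 := by linarith
          linarith [le_abs_self (T x), neg_le_abs p.1]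
        · positivity
      have h2 : Real.exp (p.2 * T x) ≤
          Real.exp ((θ0 - ε / 2) * T x) + Real.exp ((θ0 + ε / 2) * T x) :=
        exp_le_add_of_mem (by linarith [(abs_le.1 hp2).1] : θ0 - ε / 2 ≤ p.2)
          (by linarith [(abs_le.1 hp2).2] : p.2 ≤ θ0 + ε / 2)
      exact mul_le_mul h1 h2 (Real.exp_pos _).le (by positivity)
    · have hbd : (fun x => (|t0| + 1 + |T x|) *
          (Real.exp ((θ0 - ε / 2) * T x) + Real.exp ((θ0 + ε / 2) * T x)))
          = fun x => ((|t0| + 1) * Real.exp ((θ0 - ε / 2) * T x) +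
              (|t0| + 1) * Real.exp ((θ0 + ε / 2) * T x)) +
              (|T x| * Real.exp ((θ0 - ε / 2) * T x) +
                |T x| * Real.exp ((θ0 + ε / 2) * T x)) := by
        funext x; ring
      rw [hbd]
      exact (((hInt _ hb1).const_mul _).add ((hInt _ hb2).const_mul _)).add
        ((hIntAbsT _ hb1).add (hIntAbsT _ hb2))
    · filter_upwards with x
      have hc : Continuous fun p : ℝ × ℝ => max (T x - p.1) 0 * Real.exp (p.2 * T x) :=
        ((continuous_const.sub continuous_fst).max continuous_const).mul
          ((continuous_snd.mul continuous_const).rexp)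
      exact hc.tendsto (t0, θ0)
  -- continuity of the mean
  have hmval : (∫ x, Real.exp (θ0 * T x) ∂μ)⁻¹ * (∫ x, Real.exp (θ0 * T x) * T x ∂μ) = t0 := by
    rw [ht0]; exact (hCoV θ0 hθ00 T).symm
  have hm : Filter.Tendsto (fun θ => ∫ y, T y ∂(expFam μ T θ)) (𝓝 θ0) (𝓝 t0) := by
    have hmeq : (fun θ : ℝ => (∫ x, Real.exp (θ * T x) ∂μ)⁻¹ *
        (∫ x, Real.exp (θ * T x) * T x ∂μ)) =ᶠ[𝓝 θ0] fun θ => ∫ y, T y ∂(expFam μ T θ) := by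
      filter_upwards [eventually_abs_sub_lt θ0 hε] with θ hθ
      exact (hCoV θ hθ T).symm
    refine Filter.Tendsto.congr' hmeq ?_
    rw [← hmval]
    exact (hZcont.inv₀ (hZpos θ0 hθ00).ne').mul hTcont
  have hevε : ∀ᶠ p : ℝ × ℝ in 𝓝 (t0, θ0), |p.2 - θ0| < ε :=
    (continuous_snd.tendsto (t0, θ0)).eventually (eventually_abs_sub_lt θ0 hε)
  -- the cross term tends to zero
  have hprod : Filter.Tendsto (fun p : ℝ × ℝ =>
      (p.1 - ∫ y, T y ∂(expFam μ T p.2)) *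
        ∫ x, (if p.1 ≤ T x then (1:ℝ) else 0) * Real.exp (p.2 * T x) ∂μ)
      (𝓝 (t0, θ0)) (𝓝 0) := by
    have hg : Filter.Tendsto (fun p : ℝ × ℝ =>
        |p.1 - ∫ y, T y ∂(expFam μ T p.2)| * ∫ x, Real.exp (p.2 * T x) ∂μ)
        (𝓝 (t0, θ0)) (𝓝 0) := by
      have h1 : Filter.Tendsto (fun p : ℝ × ℝ => p.1 - ∫ y, T y ∂(expFam μ T p.2))
          (𝓝 (t0, θ0)) (𝓝 (t0 - t0)) :=
        (continuous_fst.tendsto _).sub (hm.comp (continuous_snd.tendsto _))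
      have h2 := (h1.abs).mul (hZcont.comp (continuous_snd.tendsto (t0, θ0)))
      simpa using h2
    refine squeeze_zero_norm' ?_ hg
    filter_upwards [hevε] with p hp
    have hJ : |∫ x, (if p.1 ≤ T x then (1:ℝ) else 0) * Real.exp (p.2 * T x) ∂μ|
        ≤ ∫ x, Real.exp (p.2 * T x) ∂μ := by
      calc |∫ x, (if p.1 ≤ T x then (1:ℝ) else 0) * Real.exp (p.2 * T x) ∂μ|
          ≤ ∫ x, |(if p.1 ≤ T x then (1:ℝ) else 0) * Real.exp (p.2 * T x)| ∂μ := by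
            rw [← Real.norm_eq_abs]
            exact (norm_integral_le_integral_norm _).trans (le_of_eq (by simp [Real.norm_eq_abs]))
        _ ≤ ∫ x, Real.exp (p.2 * T x) ∂μ := by
            refine integral_mono (hIntInd p.1 p.2 hp).abs (hInt p.2 hp) fun x => ?_
            by_cases h : p.1 ≤ T x <;>
              simp [h, abs_of_pos (Real.exp_pos (p.2 * T x)), (Real.exp_pos (p.2 * T x)).le]
    rw [norm_mul, Real.norm_eq_abs, Real.norm_eq_abs]
    exact mul_le_mul_of_nonneg_left hJ (abs_nonneg _)
  -- value at the center
  have hval : psiDot μ T t0 θ0 = (∫ x, Real.exp (θ0 * T x) ∂μ)⁻¹ *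
      (∫ x, max (T x - t0) 0 * Real.exp (θ0 * T x) ∂μ) := by
    rw [hpsi_eq t0 θ0 hθ00, ← ht0, sub_self, zero_mul, add_zero]
  constructor
  · rw [ContinuousAt]
    have hev : (fun p : ℝ × ℝ => (∫ x, Real.exp (p.2 * T x) ∂μ)⁻¹ *
        ((∫ x, max (T x - p.1) 0 * Real.exp (p.2 * T x) ∂μ) +
          (p.1 - ∫ y, T y ∂(expFam μ T p.2)) *
            ∫ x, (if p.1 ≤ T x then (1:ℝ) else 0) * Real.exp (p.2 * T x) ∂μ))
        =ᶠ[𝓝 (t0, θ0)] fun p : ℝ × ℝ => psiDot μ T p.1 p.2 := by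
      filter_upwards [hevε] with p hp
      exact (hpsi_eq p.1 p.2 hp).symm
    refine Filter.Tendsto.congr' hev ?_
    rw [hval]
    have hfin := ((hZcont.comp (continuous_snd.tendsto (t0, θ0))).inv₀
      (hZpos θ0 hθ00).ne').mul (hI1.add hprod)
    simpa using hfin
  · have hTint : ∫ x, Real.exp (θ0 * T x) * T x ∂μ = t0 * ∫ x, Real.exp (θ0 * T x) ∂μ := by
      have hZne := (hZpos θ0 hθ00).ne'
      field_simp at hmval
      rw [show (fun x => T x * Real.exp (θ0 * T x)) = fun x => Real.exp (θ0 * T x) * T x from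
        funext fun x => mul_comm _ _] at hmval
      linarith [hmval]
    have hsplit2 : (fun x => Real.exp (θ0 * T x) * |T x - t0|)
        = fun x => 2 * (max (T x - t0) 0 * Real.exp (θ0 * T x)) -
            (Real.exp (θ0 * T x) * T x - t0 * Real.exp (θ0 * T x)) := by
      funext x
      rcases le_or_gt t0 (T x) with h | h
      · rw [abs_of_nonneg (by linarith), max_eq_left (by linarith)]; ring
      · rw [abs_of_neg (by linarith), max_eq_right (by linarith)]; ring
    have habs : ∫ x, Real.exp (θ0 * T x) * |T x - t0| ∂μ
        = 2 * ∫ x, max (T x - t0) 0 * Real.exp (θ0 * T x) ∂μ := by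
      have hsub : Integrable
          (fun x => Real.exp (θ0 * T x) * T x - t0 * Real.exp (θ0 * T x)) μ :=
        (hIntTexp θ0 hθ00).sub ((hInt θ0 hθ00).const_mul t0)
      rw [hsplit2, integral_sub (((hIntMax t0 θ0 hθ00)).const_mul 2) hsub,
        integral_const_mul, integral_sub (hIntTexp θ0 hθ00) ((hInt θ0 hθ00).const_mul t0),
        integral_const_mul, hTint]
      ring
    rw [hval, hCoV θ0 hθ00 (fun x => |T x - t0|), habs]
    ring
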